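/- arXiv:1703.06045 — 2 statements merged into one kernel-verified Lean document; each statement's English description precedes it below -/
import Mathlib

section
/- Let n ≥ 3 and let φ be a CNF formula over Boolean variables indexed by Fin n consisting of m ≥ 1 clauses, each clause given by an injection c_i : Fin 3 → Fin n and signs σ_i : Fin 3 → Bool, and let S(x) = (1/(7m)) · Σ_{i} Σ_{a : Fin 3 → Bool satisfying clause i} Π_{j ∈ Fin n} w_{i,a}(j, x j), where w_{i,a}(j,b) equals (if b = a k then 1 else 0) when j = c_i k for some k, and 1/2 otherwise. Then φ is satisfiable (some x : Fin n → Bool satisfies all m clauses) if and only if max_{x} S(x) ≥ 2^{3−n}/7; moreover, if φ is unsatisfiable then max_{x} S(x) ≤ (m−1) · 2^{3−n} / (7m). -/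
/-- The leaf weight `w_{i,a}(j,b)` for a clause with variables `c : Fin 3 → Fin n` and a
partial assignment `a : Fin 3 → Bool`: it equals `if b = a k then 1 else 0` when `j = c k`
for some `k`, and `1/2` otherwise. -/
noncomputable def wfun {n : ℕ} (c : Fin 3 → Fin n) (a : Fin 3 → Bool)
    (j : Fin n) (b : Bool) : ℝ :=
  if h : ∃ k, c k = j then (if b = a h.choose then 1 else 0) else 1 / 2

/-- The SPN value `S(x) = (1/(7m)) · Σ_i Σ_{a satisfying clause i} Π_j w_{i,a}(j, x j)`. -/
noncomputable def SCnf (n m : ℕ) (c : Fin m → Fin 3 → Fin n) (σ : Fin m → Fin 3 → Bool)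
    (x : Fin n → Bool) : ℝ :=
  (1 / (7 * m)) * ∑ i, ∑ a ∈ Finset.univ.filter (fun a : Fin 3 → Bool => ∃ k, a k = σ i k),
    ∏ j, wfun (c i) a j (x j)

lemma wfun_apply {n : ℕ} (c : Fin 3 → Fin n) (hc : Function.Injective c)
    (a : Fin 3 → Bool) (k : Fin 3) (b : Bool) :
    wfun c a (c k) b = if b = a k then 1 else 0 := by
  unfold wfun
  rw [dif_pos ⟨k, rfl⟩]
  have h := (⟨k, rfl⟩ : ∃ k', c k' = c k)
  rw [hc h.choose_spec]

lemma prod_wfun {n : ℕ} (hn : 3 ≤ n) (c : Fin 3 → Fin n) (hc : Function.Injective c)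
    (a : Fin 3 → Bool) (x : Fin n → Bool) :
    ∏ j, wfun c a j (x j) =
      if (∀ k, x (c k) = a k) then (2:ℝ) ^ ((3:ℤ) - n) else 0 := by
  classical
  set s : Finset (Fin n) := Finset.univ.image c with hs
  have hcard : s.card = 3 := by
    rw [hs, Finset.card_image_of_injective _ hc, Finset.card_univ, Fintype.card_fin]
  have hsplit := Finset.prod_mul_prod_compl s (fun j => wfun c a j (x j))
  rw [← hsplit]
  have h2 : ∏ j ∈ sᶜ, wfun c a j (x j) = (2:ℝ) ^ ((3:ℤ) - n) := by
    have : ∀ j ∈ sᶜ, wfun c a j (x j) = 1 / 2 := by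
      intro j hj
      rw [Finset.mem_compl, hs] at hj
      have : ¬ ∃ k, c k = j := by
        intro ⟨k, hk⟩; exact hj (Finset.mem_image.mpr ⟨k, Finset.mem_univ _, hk⟩)
      rw [wfun, dif_neg this]
    rw [Finset.prod_congr rfl this, Finset.prod_const, Finset.card_compl, hcard,
      Fintype.card_fin]
    have hz : (3:ℤ) - n = -((n - 3 : ℕ) : ℤ) := by omega
    rw [hz, zpow_neg, zpow_natCast, one_div, inv_pow]
  have h1 : ∏ j ∈ s, wfun c a j (x j) = if (∀ k, x (c k) = a k) then (1:ℝ) else 0 := by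
    rw [hs, Finset.prod_image (fun k _ l _ h => hc h)]
    have : ∀ k ∈ Finset.univ, wfun c a (c k) (x (c k)) =
        if x (c k) = a k then (1:ℝ) else 0 := fun k _ => wfun_apply c hc a k _
    rw [Finset.prod_congr rfl this, Finset.prod_boole]
    simp
  rw [h1, h2]
  by_cases h : ∀ k, x (c k) = a k <;> simp [h]

lemma SCnf_eq (n m : ℕ) (hn : 3 ≤ n) (c : Fin m → Fin 3 → Fin n)
    (hc : ∀ i, Function.Injective (c i)) (σ : Fin m → Fin 3 → Bool) (x : Fin n → Bool) :
    SCnf n m c σ x =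
      ((Finset.univ.filter (fun i : Fin m => ∃ k, x (c i k) = σ i k)).card : ℝ) *
        (2:ℝ) ^ ((3:ℤ) - n) / (7 * m) := by
  classical
  have inner : ∀ i, (∑ a ∈ Finset.univ.filter (fun a : Fin 3 → Bool => ∃ k, a k = σ i k),
      ∏ j, wfun (c i) a j (x j)) =
      if (∃ k, x (c i k) = σ i k) then (2:ℝ) ^ ((3:ℤ) - n) else 0 := by
    intro i
    have : ∀ a ∈ Finset.univ.filter (fun a : Fin 3 → Bool => ∃ k, a k = σ i k),
        ∏ j, wfun (c i) a j (x j) =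
        if a = (fun k => x (c i k)) then (2:ℝ) ^ ((3:ℤ) - n) else 0 := by
      intro a _
      rw [prod_wfun hn (c i) (hc i) a x]
      congr 1
      simp only [eq_iff_iff]
      constructor
      · intro h; funext k; exact (h k).symm
      · intro h k; rw [h]
    rw [Finset.sum_congr rfl this, Finset.sum_ite_eq']
    simp only [Finset.mem_filter, Finset.mem_univ, true_and]
  rw [SCnf, Finset.sum_congr rfl (fun i _ => inner i), ← Finset.sum_filter,
    Finset.sum_const, nsmul_eq_mul]
  ring

/-- `φ` is satisfiable iff `max_x S(x) ≥ 2^(3−n)/7`; moreover, if `φ` is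
unsatisfiable then `max_x S(x) ≤ (m−1) · 2^(3−n) / (7m)`. -/
theorem stmt7 (n m : ℕ) (hn : 3 ≤ n) (hm : 1 ≤ m)
    (c : Fin m → Fin 3 → Fin n) (hc : ∀ i, Function.Injective (c i))
    (σ : Fin m → Fin 3 → Bool) :
    ((∃ x : Fin n → Bool, ∀ i, ∃ k, x (c i k) = σ i k) ↔
        (2 : ℝ) ^ ((3 : ℤ) - n) / 7 ≤ ⨆ x : Fin n → Bool, SCnf n m c σ x) ∧
    ((¬ ∃ x : Fin n → Bool, ∀ i, ∃ k, x (c i k) = σ i k) →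
        (⨆ x : Fin n → Bool, SCnf n m c σ x) ≤
          ((m : ℝ) - 1) * (2 : ℝ) ^ ((3 : ℤ) - n) / (7 * m)) := by
  classical
  set w : ℝ := (2:ℝ) ^ ((3:ℤ) - n) with hw
  have hwpos : 0 < w := zpow_pos (by norm_num) _
  have hmpos : (0:ℝ) < m := by exact_mod_cast hm
  have h7m : (0:ℝ) < 7 * m := by positivity
  set N : (Fin n → Bool) → ℕ :=
    fun x => (Finset.univ.filter (fun i : Fin m => ∃ k, x (c i k) = σ i k)).card with hN
  have key : ∀ x, SCnf n m c σ x = (N x : ℝ) * w / (7 * m) :=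
    fun x => SCnf_eq n m hn c hc σ x
  have hNle : ∀ x, N x ≤ m := fun x => by
    rw [hN]
    simpa using Finset.card_filter_le Finset.univ (fun i : Fin m => ∃ k, x (c i k) = σ i k)
  obtain ⟨x0, hx0⟩ := Finite.exists_max (SCnf n m c σ)
  have hsup : (⨆ x : Fin n → Bool, SCnf n m c σ x) = SCnf n m c σ x0 :=
    le_antisymm (ciSup_le hx0) (le_ciSup (Set.Finite.bddAbove (Set.finite_range _)) x0)
  have hfull : ∀ x, (∀ i, ∃ k, x (c i k) = σ i k) ↔ N x = m := by
    intro x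
    rw [hN]
    simp only
    constructor
    · intro h
      rw [Finset.filter_true_of_mem (fun i _ => h i), Finset.card_univ, Fintype.card_fin]
    · intro h i
      have : Finset.univ.filter (fun i : Fin m => ∃ k, x (c i k) = σ i k) = Finset.univ := by
        apply Finset.eq_univ_of_card
        rw [h, Fintype.card_fin]
      have := this ▸ Finset.mem_univ i
      exact (Finset.mem_filter.mp this).2
  constructor
  · constructor
    · rintro ⟨x, hx⟩
      have hNx : N x = m := (hfull x).mp hx
      have : SCnf n m c σ x = w / 7 := by
        rw [key, hNx]; field_simp
      rw [hsup, ← this]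
      exact hx0 x
    · intro h
      rw [hsup, key] at h
      have hw7 : w / 7 = (m : ℝ) * w / (7 * m) := by field_simp
      rw [hw7, div_le_div_iff_of_pos_right h7m] at h
      have hmN : (m : ℝ) ≤ (N x0 : ℝ) := le_of_mul_le_mul_right h hwpos
      have : N x0 = m := le_antisymm (hNle x0) (by exact_mod_cast hmN)
      exact ⟨x0, (hfull x0).mpr this⟩
  · intro hunsat
    rw [hsup, key]
    have hlt : N x0 < m := lt_of_le_of_ne (hNle x0)
      (fun h => hunsat ⟨x0, (hfull x0).mpr h⟩)
    have : (N x0 : ℝ) ≤ (m : ℝ) - 1 := by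
      have : (N x0 : ℝ) + 1 ≤ m := by exact_mod_cast hlt
      linarith
    gcongr
end

section
/- Fix a finite index set ι and for each i ∈ ι a finite nonempty type α i, and consider SPNs over ι as defined inductively (Leaf, Sum with convex weights, Prod over disjoint scopes), with pd defined recursively by pd(Leaf i p) = max_{v : α i} p v, pd(Sum node) = max_j w_j · pd(S_j), pd(Prod node) = Π_j pd(S_j). Then for every SPN S there exists a configuration x : ∀ i, α i with S(x) ≥ pd(S). -/
open scoped NNReal

/-- Sum-product networks over index set `ι` with variable domains `α i`, indexed by scope. -/
inductive SPN (ι : Type) (α : ι → Type) : Set ι → Type where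
  | leaf (i : ι) (p : α i → ℝ≥0) : SPN ι α {i}
  | sum {sc : Set ι} (t : ℕ) (ht : 1 ≤ t) (child : Fin t → SPN ι α sc)
      (w : Fin t → ℝ≥0) (hw : ∑ j, w j = 1) : SPN ι α sc
  | prod (t : ℕ) (scs : Fin t → Set ι)
      (hd : Pairwise fun j k => Disjoint (scs j) (scs k))
      (child : ∀ j, SPN ι α (scs j)) : SPN ι α (⋃ j, scs j)

/-- The value of an SPN at a configuration. -/
noncomputable def SPN.eval {ι : Type} {α : ι → Type} :
    {sc : Set ι} → SPN ι α sc → (∀ i, α i) → ℝ≥0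
  | _, .leaf i p, x => p (x i)
  | _, .sum _ _ child w _, x => ∑ j, w j * (child j).eval x
  | _, .prod _ _ _ child, x => ∏ j, (child j).eval x

/-- The upward pass of the max-product algorithm. -/
noncomputable def SPN.pd {ι : Type} {α : ι → Type} :
    {sc : Set ι} → SPN ι α sc → ℝ≥0
  | _, .leaf _ p => ⨆ v, p v
  | _, .sum _ _ child w _ => ⨆ j, w j * (child j).pd
  | _, .prod _ _ _ child => ∏ j, (child j).pd

/-- The product over all sum nodes of the number of their children. -/
def SPN.D {ι : Type} {α : ι → Type} :
    {sc : Set ι} → SPN ι α sc → ℕ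
  | _, .leaf _ _ => 1
  | _, .sum t _ child _ _ => t * ∏ j, (child j).D
  | _, .prod _ _ _ child => ∏ j, (child j).D

lemma SPN.eval_congr {ι : Type} {α : ι → Type} :
    ∀ {sc : Set ι} (S : SPN ι α sc) (x y : ∀ i, α i),
      (∀ i ∈ sc, x i = y i) → S.eval x = S.eval y
  | _, .leaf i p, x, y, h => by simp [SPN.eval, h i rfl]
  | _, .sum t ht child w hw, x, y, h => by
      simp only [SPN.eval]
      exact Finset.sum_congr rfl fun j _ => by rw [SPN.eval_congr (child j) x y h]
  | _, .prod t scs hd child, x, y, h => by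
      simp only [SPN.eval]
      exact Finset.prod_congr rfl fun j _ =>
        SPN.eval_congr (child j) x y fun i hi => h i (Set.mem_iUnion.2 ⟨j, hi⟩)

/-- For every SPN `S` there is a configuration `x` with `S(x) ≥ pd(S)`. -/
theorem stmt13 {ι : Type} [Fintype ι] [DecidableEq ι] {α : ι → Type}
    [∀ i, Fintype (α i)] [∀ i, Nonempty (α i)]
    {sc : Set ι} (S : SPN ι α sc) :
    ∃ x : ∀ i, α i, S.pd ≤ S.eval x := by
  induction S with
  | leaf i p =>
      obtain ⟨v, hv⟩ := Finite.exists_max p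
      refine ⟨fun i' => if h : i' = i then h ▸ v else Classical.arbitrary _, ?_⟩
      simp only [SPN.pd, SPN.eval, dif_pos rfl]
      exact ciSup_le hv
  | sum t ht child w hw ih =>
      have : Nonempty (Fin t) := ⟨⟨0, ht⟩⟩
      obtain ⟨j, hj⟩ := Finite.exists_max fun j => w j * (child j).pd
      obtain ⟨x, hx⟩ := ih j
      refine ⟨x, ?_⟩
      simp only [SPN.pd, SPN.eval]
      calc (⨆ k, w k * (child k).pd) ≤ w j * (child j).pd := ciSup_le hj
        _ ≤ w j * (child j).eval x := by gcongr
        _ ≤ ∑ k, w k * (child k).eval x := Finset.single_le_sum (f := fun k => w k * (child k).eval x) (fun _ _ => zero_le)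
            (Finset.mem_univ j)
  | prod t scs hd child ih =>
      choose xs hxs using ih
      classical
      set x : ∀ i, α i := fun i =>
        if h : ∃ j, i ∈ scs j then xs h.choose i else Classical.arbitrary _ with hxdef
      refine ⟨x, ?_⟩
      simp only [SPN.pd, SPN.eval]
      refine Finset.prod_le_prod (fun _ _ => zero_le) fun j _ => ?_
      refine (hxs j).trans (le_of_eq ?_)
      refine SPN.eval_congr (child j) (xs j) x fun i hi => ?_
      have hex : ∃ k, i ∈ scs k := ⟨j, hi⟩
      have : hex.choose = j := by
        by_contra hne
        exact (hd hne).ne_of_mem hex.choose_spec hi rfl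
      simp [hxdef, dif_pos hex, this]
end
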